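/- Let C₁, C₂, C̃₁, C̃₂ be germs at 0 of closed subsets of Euclidean spaces with C₁ ∩ C₂ = {0}, C̃₁ ∩ C̃₂ = {0}, and with well-defined finite contacts Cont(C₁, C₂) ≠ Cont(C̃₁, C̃₂). Set α₀² = min{Cont(C̃₁,C̃₂)/Cont(C₁,C₂), Cont(C₁,C₂)/Cont(C̃₁,C̃₂)} < 1. Then for every α with α₀ < α < 1, there is no bi-α-Hölder homeomorphism h : (C₁ ∪ C₂, 0) → (C̃₁ ∪ C̃₂, 0) mapping C₁ onto C̃₁ and C₂ onto C̃₂. -/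

import Mathlib

open Set Filter

/-- The separation function `f_{Γ₁,Γ₂}(r)`. -/
noncomputable def sep {E : Type*} [NormedAddCommGroup E] (Γ₁ Γ₂ : Set E) (r : ℝ) : ℝ :=
  sInf {d : ℝ | ∃ γ₁ ∈ Γ₁, ∃ γ₂ ∈ Γ₂, r ≤ ‖γ₁‖ ∧ r ≤ ‖γ₂‖ ∧ d = ‖γ₁ - γ₂‖}

/-- `Cont(Γ₁,Γ₂) = L`. -/
def hasCont {E : Type*} [NormedAddCommGroup E] (Γ₁ Γ₂ : Set E) (L : ℝ) : Prop :=
  Tendsto (fun r : ℝ => Real.log (sep Γ₁ Γ₂ r) / Real.log r) (nhdsWithin 0 (Ioi 0)) (nhds L)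

private lemma sep_nonneg' {E : Type*} [NormedAddCommGroup E] (Γ₁ Γ₂ : Set E) (r : ℝ) :
    0 ≤ sep Γ₁ Γ₂ r :=
  Real.sInf_nonneg (by rintro d ⟨γ₁, -, γ₂, -, -, -, rfl⟩; exact norm_nonneg _)

/-- From a lower bound on the log-ratio at a point `r ∈ (0,1)` with positive exponent,
deduce positivity of `sep` and an upper bound on its log. -/
private lemma aux1 {E : Type*} [NormedAddCommGroup E] (Γ₁ Γ₂ : Set E) (r κ : ℝ)
    (hr0 : 0 < r) (hr1 : r < 1) (hκ : 0 < κ)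
    (h : κ < Real.log (sep Γ₁ Γ₂ r) / Real.log r) :
    0 < sep Γ₁ Γ₂ r ∧ Real.log (sep Γ₁ Γ₂ r) < κ * Real.log r := by
  have hlr : Real.log r < 0 := Real.log_neg hr0 hr1
  have h2 : Real.log (sep Γ₁ Γ₂ r) < κ * Real.log r := (lt_div_iff_of_neg hlr).mp h
  have hneg : Real.log (sep Γ₁ Γ₂ r) < 0 := h2.trans (mul_neg_of_pos_of_neg hκ hlr)
  have hne : sep Γ₁ Γ₂ r ≠ 0 := by
    intro h0
    rw [h0, Real.log_zero] at hneg
    exact absurd hneg (lt_irrefl 0)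
  exact ⟨lt_of_le_of_ne (sep_nonneg' Γ₁ Γ₂ r) (Ne.symm hne), h2⟩

/-- The key quantitative estimate: a one-sided Hölder-type correspondence between the
pairs forces `α² · Cont(C₁,C₂) ≤ Cont(D₁,D₂)`. -/
private lemma key {E F : Type*} [NormedAddCommGroup E] [NormedAddCommGroup F]
    (C₁ C₂ : Set E) (D₁ D₂ : Set F) (K K' α c : ℝ) (hc : 0 < c)
    (hα : 0 < α) (hK1 : 1 ≤ K) (hK'1 : 1 ≤ K')
    (hK : hasCont C₁ C₂ K) (hK' : hasCont D₁ D₂ K')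
    (H : ∀ γ₁ ∈ C₁, ∀ γ₂ ∈ C₂, ∃ δ₁ ∈ D₁, ∃ δ₂ ∈ D₂,
      (1/c) * ‖γ₁‖ ^ (1/α) ≤ ‖δ₁‖ ∧ (1/c) * ‖γ₂‖ ^ (1/α) ≤ ‖δ₂‖ ∧
      ‖δ₁ - δ₂‖ ≤ c * ‖γ₁ - γ₂‖ ^ α) :
    α ^ 2 * K ≤ K' := by
  by_contra hcon
  push_neg at hcon
  have hα2pos : (0:ℝ) < 1 + α ^ 2 := by positivity
  have hdiff : 0 < α ^ 2 * K - K' := by linarith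
  set ε : ℝ := min (1/2) ((α ^ 2 * K - K') / (2 * (1 + α ^ 2))) with hεdef
  have hεpos : 0 < ε := lt_min (by norm_num) (by positivity)
  have hεhalf : ε ≤ 1/2 := min_le_left _ _
  have hεsmall : ε * (1 + α ^ 2) < α ^ 2 * K - K' := by
    have h1 : ε ≤ (α ^ 2 * K - K') / (2 * (1 + α ^ 2)) := min_le_right _ _
    have h2 : ε * (1 + α ^ 2) ≤ (α ^ 2 * K - K') / (2 * (1 + α ^ 2)) * (1 + α ^ 2) :=
      mul_le_mul_of_nonneg_right h1 hα2pos.le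
    have h3 : (α ^ 2 * K - K') / (2 * (1 + α ^ 2)) * (1 + α ^ 2) = (α ^ 2 * K - K') / 2 := by
      field_simp
    rw [h3] at h2
    linarith
  set t : ℝ := α * (K - ε) - (K' + ε) / α with htdef
  have htpos : 0 < t := by
    rw [htdef, sub_pos, div_lt_iff₀ hα]
    nlinarith [hεsmall]
  -- the rescaling map r ↦ (1/c) r^(1/α)
  have hφtendsto : Tendsto (fun r : ℝ => (1/c) * r ^ (1/α)) (nhdsWithin (0:ℝ) (Ioi 0))
      (nhdsWithin (0:ℝ) (Ioi 0)) := by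
    apply tendsto_nhdsWithin_of_tendsto_nhds_of_eventually_within
    · have h1 : ContinuousAt (fun r : ℝ => r ^ (1/α)) 0 :=
        Real.continuousAt_rpow_const 0 (1/α) (Or.inr (by positivity))
      have h2 := (h1.tendsto.const_mul (1/c)).mono_left
        (nhdsWithin_le_nhds (s := Ioi (0:ℝ)))
      have hinv : (α : ℝ)⁻¹ ≠ 0 := by positivity
      simpa [Real.zero_rpow hinv] using h2
    · filter_upwards [self_mem_nhdsWithin] with r hr
      have hr' : (0:ℝ) < r := hr
      exact mem_Ioi.mpr (by positivity)
  have hr0 : ∀ᶠ r in nhdsWithin (0:ℝ) (Ioi 0), 0 < r := eventually_mem_nhdsWithin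
  have hr1 : ∀ᶠ r in nhdsWithin (0:ℝ) (Ioi 0), r < 1 :=
    (eventually_lt_nhds one_pos).filter_mono nhdsWithin_le_nhds
  have hKgt : ∀ᶠ r in nhdsWithin (0:ℝ) (Ioi 0),
      K - ε < Real.log (sep C₁ C₂ r) / Real.log r :=
    hK.eventually (eventually_gt_nhds (by linarith))
  have hK'lt : ∀ᶠ s in nhdsWithin (0:ℝ) (Ioi 0),
      Real.log (sep D₁ D₂ s) / Real.log s < K' + ε :=
    hK'.eventually (eventually_lt_nhds (by linarith))
  have hK'gt : ∀ᶠ s in nhdsWithin (0:ℝ) (Ioi 0),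
      K' - ε < Real.log (sep D₁ D₂ s) / Real.log s :=
    hK'.eventually (eventually_gt_nhds (by linarith))
  have E1 : ∀ᶠ r in nhdsWithin (0:ℝ) (Ioi 0),
      0 < sep C₁ C₂ r ∧ Real.log (sep C₁ C₂ r) < (K - ε) * Real.log r := by
    filter_upwards [hr0, hr1, hKgt] with r h0 h1 hgt
    exact aux1 C₁ C₂ r (K - ε) h0 h1 (by linarith) hgt
  have E2 : ∀ᶠ s in nhdsWithin (0:ℝ) (Ioi 0),
      0 < sep D₁ D₂ s ∧ (K' + ε) * Real.log s < Real.log (sep D₁ D₂ s) := by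
    filter_upwards [hr0, hr1, hK'lt, hK'gt] with s h0 h1 hlt hgt
    have hls : Real.log s < 0 := Real.log_neg h0 h1
    exact ⟨(aux1 D₁ D₂ s (K' - ε) h0 h1 (by linarith) hgt).1,
      (div_lt_iff_of_neg hls).mp hlt⟩
  have E2' := hφtendsto.eventually E2
  set M : ℝ := Real.log c + α * Real.log 2 + (K' + ε) * Real.log c with hMdef
  have main : ∀ᶠ r in nhdsWithin (0:ℝ) (Ioi 0), t * (-(Real.log r)) < M := by
    filter_upwards [hr0, hr1, E1, E2'] with r h0 h1 hE1 hE2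
    obtain ⟨hsC, hlogC⟩ := hE1
    obtain ⟨hsD, hlogD⟩ := hE2
    set s : ℝ := (1/c) * r ^ (1/α) with hsdef
    have hs0 : 0 < s := by positivity
    -- the set for sep C₁ C₂ r is nonempty
    have hSrfl : sep C₁ C₂ r =
        sInf {d : ℝ | ∃ γ₁ ∈ C₁, ∃ γ₂ ∈ C₂, r ≤ ‖γ₁‖ ∧ r ≤ ‖γ₂‖ ∧ d = ‖γ₁ - γ₂‖} := rfl
    have hSne : {d : ℝ | ∃ γ₁ ∈ C₁, ∃ γ₂ ∈ C₂,
        r ≤ ‖γ₁‖ ∧ r ≤ ‖γ₂‖ ∧ d = ‖γ₁ - γ₂‖}.Nonempty := by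
      by_contra hemp
      rw [not_nonempty_iff_eq_empty] at hemp
      rw [hSrfl, hemp, Real.sInf_empty] at hsC
      exact absurd hsC (lt_irrefl 0)
    have hlt2 : sInf {d : ℝ | ∃ γ₁ ∈ C₁, ∃ γ₂ ∈ C₂,
        r ≤ ‖γ₁‖ ∧ r ≤ ‖γ₂‖ ∧ d = ‖γ₁ - γ₂‖} < 2 * sep C₁ C₂ r := by
      rw [← hSrfl]; linarith
    obtain ⟨d, hdS, hdlt⟩ := exists_lt_of_csInf_lt hSne hlt2
    obtain ⟨γ₁, hγ₁, γ₂, hγ₂, hrγ₁, hrγ₂, rfl⟩ := hdS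
    obtain ⟨δ₁, hδ₁, δ₂, hδ₂, hb₁, hb₂, hb₃⟩ := H γ₁ hγ₁ γ₂ hγ₂
    have hsδ₁ : s ≤ ‖δ₁‖ := by
      refine le_trans ?_ hb₁
      have : r ^ (1/α) ≤ ‖γ₁‖ ^ (1/α) := Real.rpow_le_rpow h0.le hrγ₁ (by positivity)
      have h1c : (0:ℝ) ≤ 1/c := by positivity
      calc s = (1/c) * r ^ (1/α) := hsdef
        _ ≤ (1/c) * ‖γ₁‖ ^ (1/α) := mul_le_mul_of_nonneg_left this h1c
    have hsδ₂ : s ≤ ‖δ₂‖ := by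
      refine le_trans ?_ hb₂
      have : r ^ (1/α) ≤ ‖γ₂‖ ^ (1/α) := Real.rpow_le_rpow h0.le hrγ₂ (by positivity)
      have h1c : (0:ℝ) ≤ 1/c := by positivity
      calc s = (1/c) * r ^ (1/α) := hsdef
        _ ≤ (1/c) * ‖γ₂‖ ^ (1/α) := mul_le_mul_of_nonneg_left this h1c
    have hsepD_le : sep D₁ D₂ s ≤ ‖δ₁ - δ₂‖ := by
      refine csInf_le ⟨0, ?_⟩ ⟨δ₁, hδ₁, δ₂, hδ₂, hsδ₁, hsδ₂, rfl⟩
      rintro x ⟨a, -, b, -, -, -, rfl⟩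
      exact norm_nonneg _
    have hchain : sep D₁ D₂ s ≤ c * (2 * sep C₁ C₂ r) ^ α := by
      refine hsepD_le.trans (hb₃.trans ?_)
      have : ‖γ₁ - γ₂‖ ^ α ≤ (2 * sep C₁ C₂ r) ^ α :=
        Real.rpow_le_rpow (norm_nonneg _) hdlt.le hα.le
      exact mul_le_mul_of_nonneg_left this hc.le
    have h2sC : (0:ℝ) < 2 * sep C₁ C₂ r := by linarith
    have hlogD_le : Real.log (sep D₁ D₂ s)
        ≤ Real.log c + α * (Real.log 2 + Real.log (sep C₁ C₂ r)) := by
      calc Real.log (sep D₁ D₂ s) ≤ Real.log (c * (2 * sep C₁ C₂ r) ^ α) :=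
            Real.log_le_log hsD hchain
        _ = Real.log c + α * Real.log (2 * sep C₁ C₂ r) := by
            rw [Real.log_mul hc.ne' (Real.rpow_pos_of_pos h2sC α).ne',
              Real.log_rpow h2sC]
        _ = Real.log c + α * (Real.log 2 + Real.log (sep C₁ C₂ r)) := by
            rw [Real.log_mul two_ne_zero hsC.ne']
    have hlogs : Real.log s = -(Real.log c) + (1/α) * Real.log r := by
      rw [hsdef, Real.log_mul (by positivity : (1/c : ℝ) ≠ 0)
        (Real.rpow_pos_of_pos h0 _).ne', Real.log_rpow h0, one_div, Real.log_inv]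
    have hαls : α * Real.log (sep C₁ C₂ r) < α * ((K - ε) * Real.log r) :=
      mul_lt_mul_of_pos_left hlogC hα
    have key1 : (K' + ε) * (-(Real.log c) + (1/α) * Real.log r)
        < Real.log c + α * Real.log 2 + α * ((K - ε) * Real.log r) := by
      calc (K' + ε) * (-(Real.log c) + (1/α) * Real.log r)
          = (K' + ε) * Real.log s := by rw [hlogs]
        _ < Real.log (sep D₁ D₂ s) := hlogD
        _ ≤ Real.log c + α * (Real.log 2 + Real.log (sep C₁ C₂ r)) := hlogD_le
        _ = Real.log c + α * Real.log 2 + α * Real.log (sep C₁ C₂ r) := by ring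
        _ < Real.log c + α * Real.log 2 + α * ((K - ε) * Real.log r) := by linarith
    have hring : t * (-(Real.log r))
        = (K' + ε) * (-(Real.log c) + (1/α) * Real.log r)
          - α * ((K - ε) * Real.log r) + (K' + ε) * Real.log c := by
      rw [htdef]; ring
    rw [hMdef, hring]
    linarith
  have hlogTop : Tendsto (fun r : ℝ => t * (-(Real.log r))) (nhdsWithin (0:ℝ) (Ioi 0))
      atTop := by
    have h1 : Tendsto Real.log (nhdsWithin (0:ℝ) (Ioi 0)) atBot :=
      Real.tendsto_log_nhdsGT_zero
    have h2 : Tendsto (fun r : ℝ => -(Real.log r)) (nhdsWithin (0:ℝ) (Ioi 0)) atTop :=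
      tendsto_neg_atTop_iff.mpr h1
    exact h2.const_mul_atTop htpos
  obtain ⟨r, hr, hr'⟩ := (main.and (hlogTop.eventually_gt_atTop M)).exists
  exact absurd hr (not_lt.mpr hr'.le)

/-- If the contacts of `(C₁, C₂)` and `(C̃₁, C̃₂)` are distinct, then for every
`α` with `α₀ < α < 1` (where `α₀² = min{Cont(C̃₁,C̃₂)/Cont(C₁,C₂), Cont(C₁,C₂)/Cont(C̃₁,C̃₂)}`)
there is no bi-`α`-Hölder homeomorphism `(C₁ ∪ C₂, 0) → (C̃₁ ∪ C̃₂, 0)` mapping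
`C₁` onto `C̃₁` and `C₂` onto `C̃₂`. -/
theorem no_biHolder_of_cont_ne {n m : ℕ}
    (C₁ C₂ : Set (EuclideanSpace ℝ (Fin n))) (D₁ D₂ : Set (EuclideanSpace ℝ (Fin m)))
    (hC₁ : IsClosed C₁) (hC₂ : IsClosed C₂) (hD₁ : IsClosed D₁) (hD₂ : IsClosed D₂)
    (hint : C₁ ∩ C₂ = {0}) (hint' : D₁ ∩ D₂ = {0})
    (K K' : ℝ) (hK : hasCont C₁ C₂ K) (hK' : hasCont D₁ D₂ K')
    (hK1 : 1 ≤ K) (hK'1 : 1 ≤ K') (hne : K ≠ K')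
    (α₀ : ℝ) (hα₀pos : 0 < α₀) (hα₀ : α₀ ^ 2 = min (K' / K) (K / K')) :
    ∀ α : ℝ, α₀ < α → α < 1 →
      ¬ ∃ (h : EuclideanSpace ℝ (Fin n) → EuclideanSpace ℝ (Fin m)) (c : ℝ),
          0 < c ∧ h 0 = 0 ∧ Set.BijOn h (C₁ ∪ C₂) (D₁ ∪ D₂) ∧
          h '' C₁ = D₁ ∧ h '' C₂ = D₂ ∧
          ∀ p ∈ C₁ ∪ C₂, ∀ q ∈ C₁ ∪ C₂,
            (1 / c) * ‖p - q‖ ^ (1 / α) ≤ ‖h p - h q‖ ∧ ‖h p - h q‖ ≤ c * ‖p - q‖ ^ α := by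
  rintro α hα₀α hα1 ⟨h, c, hc, h0, hbij, himg1, himg2, hH⟩
  have hαpos : 0 < α := hα₀pos.trans hα₀α
  have hαne : α ≠ 0 := hαpos.ne'
  have hKpos : 0 < K := lt_of_lt_of_le one_pos hK1
  have hK'pos : 0 < K' := lt_of_lt_of_le one_pos hK'1
  have h0C₁ : (0 : EuclideanSpace ℝ (Fin n)) ∈ C₁ := by
    have : (0 : EuclideanSpace ℝ (Fin n)) ∈ C₁ ∩ C₂ := by rw [hint]; exact rfl
    exact this.1
  have h0U : (0 : EuclideanSpace ℝ (Fin n)) ∈ C₁ ∪ C₂ := Or.inl h0C₁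
  -- Direction 1: α² K ≤ K'
  have dir1 : α ^ 2 * K ≤ K' := by
    refine key C₁ C₂ D₁ D₂ K K' α c hc hαpos hK1 hK'1 hK hK' ?_
    intro γ₁ hγ₁ γ₂ hγ₂
    refine ⟨h γ₁, himg1 ▸ mem_image_of_mem h hγ₁, h γ₂, himg2 ▸ mem_image_of_mem h hγ₂,
      ?_, ?_, ?_⟩
    · have := (hH γ₁ (Or.inl hγ₁) 0 h0U).1
      rwa [sub_zero, h0, sub_zero] at this
    · have := (hH γ₂ (Or.inr hγ₂) 0 h0U).1
      rwa [sub_zero, h0, sub_zero] at this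
    · exact (hH γ₁ (Or.inl hγ₁) γ₂ (Or.inr hγ₂)).2
  -- Direction 2: α² K' ≤ K
  set c' : ℝ := max (c ^ (1/α)) (c ^ α) with hc'def
  have hc'pos : 0 < c' := lt_max_of_lt_left (Real.rpow_pos_of_pos hc _)
  have dir2 : α ^ 2 * K' ≤ K := by
    refine key D₁ D₂ C₁ C₂ K' K α c' hc'pos hαpos hK'1 hK1 hK' hK ?_
    intro δ₁ hδ₁ δ₂ hδ₂
    rw [← himg1] at hδ₁
    rw [← himg2] at hδ₂
    obtain ⟨γ₁, hγ₁, rfl⟩ := hδ₁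
    obtain ⟨γ₂, hγ₂, rfl⟩ := hδ₂
    have hnormbound : ∀ γ ∈ C₁ ∪ C₂, (1/c') * ‖h γ‖ ^ (1/α) ≤ ‖γ‖ := by
      intro γ hγ
      have hub := (hH γ hγ 0 h0U).2
      rw [sub_zero, h0, sub_zero] at hub
      -- ‖h γ‖ ≤ c * ‖γ‖ ^ α
      have h1 : ‖h γ‖ ^ (1/α) ≤ (c * ‖γ‖ ^ α) ^ (1/α) :=
        Real.rpow_le_rpow (norm_nonneg _) hub (by positivity)
      have h2 : (c * ‖γ‖ ^ α) ^ (1/α) = c ^ (1/α) * ‖γ‖ := by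
        rw [Real.mul_rpow hc.le (Real.rpow_nonneg (norm_nonneg _) _),
          ← Real.rpow_mul (norm_nonneg _), mul_one_div_cancel hαne, Real.rpow_one]
      rw [h2] at h1
      have h3 : (1/c') * ‖h γ‖ ^ (1/α) ≤ (1/c') * (c ^ (1/α) * ‖γ‖) :=
        mul_le_mul_of_nonneg_left h1 (by positivity)
      refine h3.trans ?_
      rw [show (1/c') * (c ^ (1/α) * ‖γ‖) = (c ^ (1/α) / c') * ‖γ‖ from by ring]
      have h4 : c ^ (1/α) / c' ≤ 1 := (div_le_one hc'pos).mpr (le_max_left _ _)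
      calc (c ^ (1/α) / c') * ‖γ‖ ≤ 1 * ‖γ‖ :=
            mul_le_mul_of_nonneg_right h4 (norm_nonneg _)
        _ = ‖γ‖ := one_mul _
    refine ⟨γ₁, hγ₁, γ₂, hγ₂, hnormbound _ (Or.inl hγ₁), hnormbound _ (Or.inr hγ₂), ?_⟩
    have hlb := (hH γ₁ (Or.inl hγ₁) γ₂ (Or.inr hγ₂)).1
    have h1 : ‖γ₁ - γ₂‖ ^ (1/α) ≤ c * ‖h γ₁ - h γ₂‖ := by
      have h' := mul_le_mul_of_nonneg_left hlb hc.le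
      rwa [show c * ((1/c) * ‖γ₁ - γ₂‖ ^ (1/α)) = ‖γ₁ - γ₂‖ ^ (1/α) from by
        field_simp] at h'
    have h2 : ‖γ₁ - γ₂‖ ≤ (c * ‖h γ₁ - h γ₂‖) ^ α := by
      have h3 : (‖γ₁ - γ₂‖ ^ (1/α)) ^ α ≤ (c * ‖h γ₁ - h γ₂‖) ^ α :=
        Real.rpow_le_rpow (Real.rpow_nonneg (norm_nonneg _) _) h1 hαpos.le
      rwa [← Real.rpow_mul (norm_nonneg _), one_div_mul_cancel hαne,
        Real.rpow_one] at h3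
    calc ‖γ₁ - γ₂‖ ≤ (c * ‖h γ₁ - h γ₂‖) ^ α := h2
      _ = c ^ α * ‖h γ₁ - h γ₂‖ ^ α := Real.mul_rpow hc.le (norm_nonneg _)
      _ ≤ c' * ‖h γ₁ - h γ₂‖ ^ α :=
          mul_le_mul_of_nonneg_right (le_max_right _ _)
            (Real.rpow_nonneg (norm_nonneg _) _)
  -- Conclusion
  have hmin : α ^ 2 ≤ min (K' / K) (K / K') := by
    refine le_min ?_ ?_
    · rw [le_div_iff₀ hKpos]; exact dir1
    · rw [le_div_iff₀ hK'pos]; exact dir2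
  have : α₀ ^ 2 < α ^ 2 := by
    have := pow_lt_pow_left₀ hα₀α hα₀pos.le (two_ne_zero)
    exact this
  rw [hα₀] at this
  linarith
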